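/- If the function (a,b) ↦ 1{a+b>θ} α_F(θ) - (1-F(θ-a))(1-F(θ-b)) vanishes F×F-almost surely, then there do not exist u, v in the support of F with u < θ/2 < v and u + v > θ. -/
import Mathlib


open MeasureTheory Set

/-- If `(a,b) ↦ 1{a+b>θ} α_F(θ) - (1-F(θ-a))(1-F(θ-b))` vanishes
`μ × μ`-almost surely, where `α_F(θ) = ∫∫ 1{a+b>θ} μ(da) μ(db)`, then there do not
exist `u, v` in the support of `F` with `u < θ/2 < v` and `u + v > θ`. -/
theorem stmt_8 (μ : Measure ℝ) [IsProbabilityMeasure μ] (θ : ℝ) (hθ : 0 < θ)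
    (F : ℝ → ℝ) (hF : F = fun x => (μ (Iic x)).toReal)
    (α : ℝ) (hα : α = ((μ.prod μ) {p : ℝ × ℝ | θ < p.1 + p.2}).toReal)
    (hvanish : ∀ᵐ p ∂(μ.prod μ),
      (if θ < p.1 + p.2 then (1 : ℝ) else 0) * α
        - (1 - F (θ - p.1)) * (1 - F (θ - p.2)) = 0) :
    ¬ ∃ u v : ℝ,
        (∀ ε > 0, F (u - ε) < F (u + ε)) ∧ (∀ ε > 0, F (v - ε) < F (v + ε)) ∧
        u < θ / 2 ∧ θ / 2 < v ∧ θ < u + v := by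
  rintro ⟨u, v, hu, hv, hu2, hv2, huv⟩
  set ε : ℝ := min ((θ - 2*u)/4) ((u + v - θ)/4) with hε
  have hε1 : ε ≤ (θ - 2*u)/4 := min_le_left _ _
  have hε2 : ε ≤ (u + v - θ)/4 := min_le_right _ _
  have εpos : 0 < ε := lt_min (by linarith) (by linarith)
  set S : Set ℝ := Ioc (u - ε) (u + ε) with hSdef
  set S' : Set ℝ := Ioc (v - ε) (v + ε) with hS'def
  -- positive measure of S and S'
  have key : ∀ w : ℝ, F (w - ε) < F (w + ε) → μ (Ioc (w - ε) (w + ε)) ≠ 0 := by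
    intro w hw h0
    have hle : μ (Iic (w + ε)) ≤ μ (Iic (w - ε)) := by
      rw [← Iic_union_Ioc_eq_Iic (by linarith : w - ε ≤ w + ε)]
      exact (measure_union_le _ _).trans (by rw [h0, add_zero])
    have : F (w + ε) ≤ F (w - ε) := by
      rw [hF]
      exact ENNReal.toReal_mono (measure_ne_top _ _) hle
    linarith
  have hS : μ S ≠ 0 := key u (hu ε εpos)
  have hS' : μ S' ≠ 0 := key v (hv ε εpos)
  -- sums
  have h1 : ∀ a ∈ S, ∀ b ∈ S, ¬ θ < a + b := by
    rintro a ⟨_, ha⟩ b ⟨_, hb⟩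
    simp only [not_lt]; linarith
  have h2 : ∀ a ∈ S, ∀ b ∈ S', θ < a + b := by
    rintro a ⟨ha, _⟩ b ⟨hb, _⟩
    linarith
  -- α > 0
  have hαpos : 0 < α := by
    have hsub : S ×ˢ S' ⊆ {p : ℝ × ℝ | θ < p.1 + p.2} := by
      rintro ⟨a, b⟩ ⟨ha, hb⟩
      exact h2 a ha b hb
    have hm : μ S * μ S' ≤ (μ.prod μ) {p : ℝ × ℝ | θ < p.1 + p.2} := by
      rw [← Measure.prod_prod]
      exact measure_mono hsub
    have hne : (μ.prod μ) {p : ℝ × ℝ | θ < p.1 + p.2} ≠ 0 := by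
      intro h
      rw [h] at hm
      rcases mul_eq_zero.mp (le_antisymm hm bot_le) with h' | h'
      exacts [hS h', hS' h']
    rw [hα]
    exact ENNReal.toReal_pos hne (measure_ne_top _ _)
  -- the null set
  set N : Set (ℝ × ℝ) := {p : ℝ × ℝ |
      ¬ ((if θ < p.1 + p.2 then (1 : ℝ) else 0) * α
        - (1 - F (θ - p.1)) * (1 - F (θ - p.2)) = 0)} with hNdef
  have hN : (μ.prod μ) N = 0 := by
    rw [← ae_iff] at *
    exact hvanish
  -- T : points of S with F(θ-a) ≠ 1 ; T' : with = 1
  set T : Set ℝ := {a | a ∈ S ∧ F (θ - a) ≠ 1} with hTdef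
  set T' : Set ℝ := {a | a ∈ S ∧ F (θ - a) = 1} with hT'def
  have hT : μ T = 0 := by
    have hsub : T ×ˢ T ⊆ N := by
      rintro ⟨a, b⟩ ⟨⟨haS, ha⟩, ⟨hbS, hb⟩⟩
      simp only [hNdef, mem_setOf_eq, if_neg (h1 a haS b hbS), zero_mul, zero_sub, neg_eq_zero]
      exact mul_ne_zero (sub_ne_zero.mpr (Ne.symm ha)) (sub_ne_zero.mpr (Ne.symm hb))
    have : μ T * μ T ≤ 0 := by
      rw [← Measure.prod_prod, ← hN]
      exact measure_mono hsub
    rcases mul_eq_zero.mp (le_antisymm this bot_le) with h | h <;> exact h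
  have hT' : μ T' = 0 := by
    have hsub : T' ×ˢ S' ⊆ N := by
      rintro ⟨a, b⟩ ⟨⟨haS, ha⟩, hbS⟩
      simp only [hNdef, mem_setOf_eq, if_pos (h2 a haS b hbS), one_mul, ha, sub_self, zero_mul,
        sub_zero]
      exact ne_of_gt hαpos
    have : μ T' * μ S' ≤ 0 := by
      rw [← Measure.prod_prod, ← hN]
      exact measure_mono hsub
    rcases mul_eq_zero.mp (le_antisymm this bot_le) with h | h
    · exact h
    · exact absurd h hS'
  have : μ S ≤ μ T + μ T' := by
    have : S ⊆ T ∪ T' := by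
      intro a ha
      by_cases h : F (θ - a) = 1
      · exact Or.inr ⟨ha, h⟩
      · exact Or.inl ⟨ha, h⟩
    exact (measure_mono this).trans (measure_union_le _ _)
  rw [hT, hT', add_zero] at this
  exact hS (le_antisymm this bot_le)
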